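/- Let L be the analytic continuation of y ↦ Li₂(-e^y) from the strip ℝ + i(-π,π) to ℂ with the two vertical branch cuts i(-∞,-π) and i(π,∞), defined to be 2πi-periodic on the left half-plane Re y < 0. Then for every y with Re y > 0, L satisfies the functional equation L(y + 2πi) = L(y) - 2πi(y + πi). -/

import Mathlib

open Complex Real

/-- The principal dilogarithm, `Li₂(z) = -∫₀^z Log(1-u) du/u`. -/
noncomputable def dilog (z : ℂ) : ℂ :=
  -∫ t in (0:ℝ)..1, Complex.log (1 - (t : ℂ) * z) / (t : ℂ)

open intervalIntegral MeasureTheory Set Metric Filter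

/-- Auxiliary real function: `J a = ∫₀¹ log(1+ta)/t dt`. -/
noncomputable def dilogJ (a : ℝ) : ℝ := ∫ t in (0:ℝ)..1, Real.log (1 + t * a) / t

lemma dilogJ_hasDerivAt {a : ℝ} (ha : 0 < a) :
    HasDerivAt dilogJ (Real.log (1 + a) / a) a := by
  have hmeas : ∀ x : ℝ, AEStronglyMeasurable (fun t : ℝ => Real.log (1 + t * x) / t)
      (MeasureTheory.volume.restrict (Set.uIoc (0:ℝ) 1)) := by
    intro x
    exact ((Real.measurable_log.comp
      (measurable_const.add (measurable_id.mul_const x))).div measurable_id).aestronglyMeasurable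
  have hIoc : Set.uIoc (0:ℝ) 1 = Set.Ioc (0:ℝ) 1 := Set.uIoc_of_le (by norm_num)
  have key := intervalIntegral.hasDerivAt_integral_of_dominated_loc_of_deriv_le
      (F := fun x t => Real.log (1 + t * x) / t) (F' := fun x t => 1 / (1 + t * x))
      (x₀ := a) (bound := fun _ => (1:ℝ)) (a := (0:ℝ)) (b := 1) (μ := volume)
      (Metric.ball_mem_nhds a (half_pos ha)) (Filter.Eventually.of_forall fun x => hmeas x)
      ?hFint ((measurable_const.div
        (measurable_const.add (measurable_id.mul_const a))).aestronglyMeasurable)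
      ?hbound intervalIntegrable_const ?hdiff
  case hFint =>
    rw [intervalIntegrable_iff, hIoc]
    have hconst : MeasureTheory.IntegrableOn (fun _ : ℝ => a) (Set.Ioc (0:ℝ) 1) volume :=
      MeasureTheory.integrableOn_const measure_Ioc_lt_top.ne
    refine hconst.mono' ?_ ?_
    · exact (hmeas a).mono_measure (MeasureTheory.Measure.restrict_mono (hIoc ▸ le_refl _) le_rfl)
    refine (MeasureTheory.ae_restrict_iff' measurableSet_Ioc).2
      (Filter.Eventually.of_forall fun t ht => ?_)
    have ht0 : 0 < t := ht.1
    have h1 : 0 < 1 + t * a := by positivity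
    have hlog0 : 0 ≤ Real.log (1 + t * a) := Real.log_nonneg (by nlinarith)
    have hlogle : Real.log (1 + t * a) ≤ t * a :=
      (Real.log_le_sub_one_of_pos h1).trans (by ring_nf; exact le_refl _)
    rw [Real.norm_eq_abs, abs_div, _root_.abs_of_nonneg hlog0, _root_.abs_of_pos ht0]
    rw [div_le_iff₀ ht0]
    nlinarith
  case hbound =>
    refine Filter.Eventually.of_forall fun t ht x hx => ?_
    rw [hIoc] at ht
    have hx' : a / 2 < x := by
      have h := mem_ball_iff_norm.1 hx
      rw [Real.norm_eq_abs] at h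
      have := abs_lt.1 h
      linarith
    have h1 : 1 ≤ 1 + t * x := by nlinarith [ht.1, hx', ha]
    rw [Real.norm_eq_abs, abs_div, abs_one, abs_of_pos (by linarith : (0:ℝ) < 1 + t * x)]
    rw [div_le_one (by linarith)]
    linarith
  case hdiff =>
    refine Filter.Eventually.of_forall fun t ht x hx => ?_
    rw [hIoc] at ht
    have hx' : a / 2 < x := by
      have h := mem_ball_iff_norm.1 hx
      rw [Real.norm_eq_abs] at h
      have := abs_lt.1 h
      linarith
    have h1 : (0:ℝ) < 1 + t * x := by nlinarith [ht.1, ha]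
    have hd : HasDerivAt (fun x : ℝ => 1 + t * x) t x := by
      simpa using ((hasDerivAt_id x).const_mul t).const_add 1
    have ht' : t ≠ 0 := ht.1.ne'
    have h1' : (1:ℝ) + t * x ≠ 0 := h1.ne'
    have := (hd.log h1').div_const t
    convert this using 1
    · rfl
    field_simp
  -- now evaluate the integral of the derivative
  have hval : (∫ t in (0:ℝ)..1, 1 / (1 + t * a)) = Real.log (1 + a) / a := by
    have hcont : ContinuousOn (fun t : ℝ => 1 / (1 + t * a)) (Set.uIcc (0:ℝ) 1) := by
      refine ContinuousOn.div continuousOn_const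
        (continuousOn_const.add ((continuousOn_id).mul continuousOn_const)) ?_
      intro t ht
      rw [Set.uIcc_of_le (by norm_num : (0:ℝ) ≤ 1)] at ht
      have : 0 ≤ t := ht.1
      positivity
    have := intervalIntegral.integral_eq_sub_of_hasDerivAt
      (f := fun t : ℝ => Real.log (1 + t * a) / a)
      (f' := fun t : ℝ => 1 / (1 + t * a)) (a := (0:ℝ)) (b := 1) ?_ (hcont.intervalIntegrable)
    · rw [this]; simp
    · intro t ht
      rw [Set.uIcc_of_le (by norm_num : (0:ℝ) ≤ 1)] at ht
      have h1 : (0:ℝ) < 1 + t * a := by nlinarith [ht.1, ha]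
      have hd : HasDerivAt (fun s : ℝ => 1 + s * a) a t := by
        simpa using ((hasDerivAt_id t).mul_const a).const_add 1
      have h1' : (1:ℝ) + t * a ≠ 0 := h1.ne'
      have := (hd.log h1').div_const a
      convert this using 1
      · rfl
      field_simp
  exact hval ▸ key.2

lemma dilog_neg_exp_real (x : ℝ) :
    dilog (-Complex.exp x) = -((dilogJ (Real.exp x) : ℝ) : ℂ) := by
  unfold dilog dilogJ
  rw [neg_inj, ← intervalIntegral.integral_ofReal]
  refine intervalIntegral.integral_congr fun t ht => ?_
  rw [Set.uIcc_of_le (by norm_num : (0:ℝ) ≤ 1)] at ht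
  have h1 : (0:ℝ) < 1 + t * Real.exp x := by nlinarith [ht.1, Real.exp_pos x]
  have harg : 1 - (t : ℂ) * (-Complex.exp x) = ((1 + t * Real.exp x : ℝ) : ℂ) := by
    push_cast [Complex.ofReal_exp]
    ring
  rw [harg, ← Complex.ofReal_log h1.le, Complex.ofReal_div]

/-- Let `L` be the analytic continuation of `y ↦ Li₂(-e^y)` from the strip `ℝ + i(-π,π)`
to `ℂ` minus the two vertical cuts `i(-∞,-π)` and `i(π,∞)`, defined to be `2πi`-periodic
on the left half-plane `Re y < 0`. Then for `Re y > 0`,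
`L(y + 2πi) = L(y) - 2πi(y + πi)`. -/
theorem extended_dilog_functional_equation (L : ℂ → ℂ)
    (hholo : DifferentiableOn ℂ L {y : ℂ | ¬(y.re = 0 ∧ (y.im ≤ -π ∨ π ≤ y.im))})
    (hstrip : ∀ y : ℂ, -π < y.im → y.im < π → L y = dilog (-Complex.exp y))
    (hper : ∀ y : ℂ, y.re < 0 → L (y + 2 * (π : ℂ) * Complex.I) = L y) :
    ∀ y : ℂ, 0 < y.re →
      L (y + 2 * (π : ℂ) * Complex.I)
        = L y - 2 * (π : ℂ) * Complex.I * (y + (π : ℂ) * Complex.I) := by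
  set Ω : Set ℂ := {y : ℂ | ¬(y.re = 0 ∧ (y.im ≤ -π ∨ π ≤ y.im))} with hΩdef
  have hΩmem : ∀ y : ℂ, y ∈ Ω ↔ y.re ≠ 0 ∨ (-π < y.im ∧ y.im < π) := by
    intro y
    rw [hΩdef]
    simp only [Set.mem_setOf_eq]
    push_neg
    constructor
    · intro h
      by_cases hre : y.re = 0
      · exact Or.inr (h hre)
      · exact Or.inl hre
    · rintro (h | h) h'
      · exact absurd h' h
      · exact h
  have hΩo : IsOpen Ω := by
    rw [hΩdef]
    have : IsClosed {y : ℂ | y.re = 0 ∧ (y.im ≤ -π ∨ π ≤ y.im)} := by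
      refine (isClosed_eq Complex.continuous_re continuous_const).inter ?_
      exact (isClosed_le Complex.continuous_im continuous_const).union
        (isClosed_le continuous_const Complex.continuous_im)
    have heq : {y : ℂ | ¬(y.re = 0 ∧ (y.im ≤ -π ∨ π ≤ y.im))} =
        {y : ℂ | y.re = 0 ∧ (y.im ≤ -π ∨ π ≤ y.im)}ᶜ := rfl
    rw [heq]
    exact this.isOpen_compl
  have hΩsym : ∀ y : ℂ, y ∈ Ω → -y ∈ Ω := by
    intro y hy
    rw [hΩmem] at hy ⊢
    rcases hy with h | h
    · left; simpa using h
    · right; constructor <;> simp <;> linarith [h.1, h.2]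
  have hΩpre : IsPreconnected Ω := by
    have hS : IsPreconnected {y : ℂ | -π < y.im ∧ y.im < π} :=
      ((convex_halfSpace_im_gt (-π)).inter (convex_halfSpace_im_lt π)).isPreconnected
    have hP : IsPreconnected {y : ℂ | y.re < 0} := (convex_halfSpace_re_lt 0).isPreconnected
    have hQ : IsPreconnected {y : ℂ | 0 < y.re} := (convex_halfSpace_re_gt 0).isPreconnected
    have h1 : IsPreconnected ({y : ℂ | -π < y.im ∧ y.im < π} ∪ {y : ℂ | y.re < 0}) := by
      refine IsPreconnected.union (-1 : ℂ) ?_ ?_ hS hP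
      · constructor <;> simp [Real.pi_pos]
      · simp
    have h2 : IsPreconnected (({y : ℂ | -π < y.im ∧ y.im < π} ∪ {y : ℂ | y.re < 0})
        ∪ {y : ℂ | 0 < y.re}) := by
      refine IsPreconnected.union (1 : ℂ) ?_ ?_ h1 hQ
      · left; constructor <;> simp [Real.pi_pos]
      · simp
    have heq : Ω = ({y : ℂ | -π < y.im ∧ y.im < π} ∪ {y : ℂ | y.re < 0})
        ∪ {y : ℂ | 0 < y.re} := by
      ext y
      rw [hΩmem]
      simp only [Set.mem_union, Set.mem_setOf_eq]
      constructor
      · rintro (h | h)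
        · rcases (Ne.lt_or_gt h) with h' | h'
          · exact Or.inl (Or.inr h')
          · exact Or.inr h'
        · exact Or.inl (Or.inl h)
      · rintro ((h | h) | h)
        · exact Or.inr h
        · exact Or.inl h.ne
        · exact Or.inl h.ne'
    rw [heq]
    exact h2
  -- the symmetrized function
  set N : ℂ → ℂ := fun y => L y + L (-y) + y ^ 2 / 2 with hNdef
  have hNdiff : DifferentiableOn ℂ N Ω := by
    refine DifferentiableOn.add (hholo.add ?_) ?_
    · exact hholo.comp (differentiable_neg.differentiableOn) (fun y hy => hΩsym y hy)
    · exact ((differentiable_id.pow 2).div_const 2).differentiableOn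
  have hNan : AnalyticOnNhd ℂ N Ω := hNdiff.analyticOnNhd hΩo
  -- real function computation
  set m : ℝ → ℝ := fun x => -dilogJ (Real.exp x) - dilogJ (Real.exp (-x)) + x ^ 2 / 2 with hmdef
  have hNreal : ∀ x : ℝ, N (x : ℂ) = ((m x : ℝ) : ℂ) := by
    intro x
    have him : ∀ r : ℝ, -π < (r : ℂ).im ∧ (r : ℂ).im < π := by
      intro r; constructor <;> simp [Real.pi_pos]
    have h1 : L (x : ℂ) = dilog (-Complex.exp x) := hstrip _ (him x).1 (him x).2
    have h2 : L (-(x : ℂ)) = dilog (-Complex.exp (-x : ℝ)) := by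
      rw [show -(x : ℂ) = ((-x : ℝ) : ℂ) by push_cast; ring]
      exact hstrip _ (him (-x)).1 (him (-x)).2
    rw [hNdef]
    simp only
    rw [h1, h2, dilog_neg_exp_real, dilog_neg_exp_real, hmdef]
    push_cast
    ring
  -- derivative of m is zero
  have hm' : ∀ x : ℝ, HasDerivAt m 0 x := by
    intro x
    have he1 : HasDerivAt (fun x : ℝ => dilogJ (Real.exp x)) (Real.log (1 + Real.exp x)) x := by
      have := (dilogJ_hasDerivAt (Real.exp_pos x)).comp x (Real.hasDerivAt_exp x)
      convert this using 1
      · rfl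
      · rfl
      · rfl
      exact (div_mul_cancel₀ _ (Real.exp_pos x).ne').symm
    have he2 : HasDerivAt (fun x : ℝ => dilogJ (Real.exp (-x)))
        (-Real.log (1 + Real.exp (-x))) x := by
      have hneg : HasDerivAt (fun x : ℝ => Real.exp (-x)) (-Real.exp (-x)) x := by
        simpa [Function.comp_def] using (Real.hasDerivAt_exp (-x)).comp x ((hasDerivAt_id x).neg)
      have := (dilogJ_hasDerivAt (Real.exp_pos (-x))).comp x hneg
      convert this using 1
      · rfl
      · rfl
      · rfl
      rw [mul_neg, div_mul_cancel₀ _ (Real.exp_pos (-x)).ne']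
    have hsq : HasDerivAt (fun x : ℝ => x ^ 2 / 2) x x := by
      simpa using ((hasDerivAt_pow 2 x).div_const 2)
    have htotal : HasDerivAt m
        (-Real.log (1 + Real.exp x) - -Real.log (1 + Real.exp (-x)) + x) x := by
      rw [hmdef]
      exact (he1.neg.sub he2).add hsq
    have h1 : (1 : ℝ) + Real.exp (-x) = Real.exp (-x) * (1 + Real.exp x) := by
      rw [mul_add, mul_one, ← Real.exp_add, neg_add_cancel, Real.exp_zero]
      exact add_comm _ _
    have h2 : Real.log (1 + Real.exp (-x)) = -x + Real.log (1 + Real.exp x) := by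
      rw [h1, Real.log_mul (Real.exp_pos (-x)).ne' (by positivity), Real.log_exp]
    have hz : -Real.log (1 + Real.exp x) - -Real.log (1 + Real.exp (-x)) + x = 0 := by
      rw [h2]; ring
    rw [← hz]
    exact htotal
  have hmconst : ∀ x : ℝ, m x = m 0 := by
    intro x
    exact is_const_of_deriv_eq_zero (fun x => (hm' x).differentiableAt)
      (fun x => (hm' x).deriv) x 0
  -- identity theorem: N is constant on Ω
  have h0mem : (0 : ℂ) ∈ Ω := by
    rw [hΩmem]; right; constructor <;> simp [Real.pi_pos]
  have hfreq : ∃ᶠ z in nhdsWithin (0 : ℂ) {(0:ℂ)}ᶜ, N z = (fun _ => N 0) z := by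
    have htend : Filter.Tendsto (fun n : ℕ => (((1 : ℝ) / (n + 1) : ℝ) : ℂ)) Filter.atTop
        (nhdsWithin (0 : ℂ) {(0:ℂ)}ᶜ) := by
      rw [tendsto_nhdsWithin_iff]
      constructor
      · have : Filter.Tendsto (fun n : ℕ => ((1 : ℝ) / (n + 1))) Filter.atTop (nhds 0) :=
          tendsto_one_div_add_atTop_nhds_zero_nat
        have h := (Complex.continuous_ofReal.tendsto 0).comp this
        simpa [Function.comp_def] using h
      · refine Filter.Eventually.of_forall fun n => ?_
        simp only [Set.mem_compl_iff, Set.mem_singleton_iff]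
        intro h
        have : (1 : ℝ) / (n + 1) = 0 := by exact_mod_cast h
        have hpos : (0:ℝ) < 1 / ((n:ℝ) + 1) := by positivity
        linarith
    refine htend.frequently (Filter.Frequently.of_forall fun n => ?_)
    have h1 := hNreal ((1 : ℝ) / (n + 1))
    have h2 := hNreal 0
    simp only
    rw [h1, hmconst, ← h2]
    norm_num
  have hEq : Set.EqOn N (fun _ => N 0) Ω :=
    hNan.eqOn_of_preconnected_of_frequently_eq analyticOnNhd_const hΩpre h0mem hfreq
  -- final algebra
  intro y hy
  have hre2pi : (2 * (π : ℂ) * Complex.I).re = 0 := by simp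
  have hmem1 : y ∈ Ω := by rw [hΩmem]; exact Or.inl hy.ne'
  have hmem2 : y + 2 * (π : ℂ) * Complex.I ∈ Ω := by
    rw [hΩmem]; left
    rw [Complex.add_re, hre2pi]
    simpa using hy.ne'
  have h1 := hEq hmem1
  have h2 := hEq hmem2
  have hreneg : (-(y + 2 * (π : ℂ) * Complex.I)).re < 0 := by
    rw [Complex.neg_re, Complex.add_re, hre2pi]
    linarith
  have h3 : L (-(y + 2 * (π : ℂ) * Complex.I)) = L (-y) := by
    have h4 := hper (-(y + 2 * (π : ℂ) * Complex.I)) hreneg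
    rw [show -(y + 2 * (π : ℂ) * Complex.I) + 2 * (π : ℂ) * Complex.I = -y by ring] at h4
    exact h4.symm
  simp only [hNdef] at h1 h2
  linear_combination h2 - h1 - h3
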